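/- Let Φ : ℝ → (-∞,∞] be given by Φ(y) = −ln y for y > 0 and +∞ for y ≤ 0. Then for x > 0 and y ∈ ℝ, inf_{y'∈ℝ}(Φ(y') + (y−y')²/x) = −ln((y + √(y²+2x))/2) + (√(y²+2x) − y)²/(4x). -/
import Mathlib


open Classical in
noncomputable def PhiLog (y : ℝ) : EReal :=
  if 0 < y then ((-Real.log y : ℝ) : EReal) else ⊤

theorem infConv_log (x y : ℝ) (hx : 0 < x) :
    (⨅ y' : ℝ, PhiLog y' + (((y - y') ^ 2 / x : ℝ) : EReal))
      = ((-Real.log ((y + Real.sqrt (y ^ 2 + 2 * x)) / 2)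
          + (Real.sqrt (y ^ 2 + 2 * x) - y) ^ 2 / (4 * x) : ℝ) : EReal) := by
  set s := Real.sqrt (y ^ 2 + 2 * x) with hs
  have hs2 : s ^ 2 = y ^ 2 + 2 * x := Real.sq_sqrt (by positivity)
  have hs0 : 0 ≤ s := Real.sqrt_nonneg _
  have hsy : y < s := by nlinarith
  have hsy' : -y < s := by nlinarith
  set t := (y + s) / 2 with ht
  have htpos : 0 < t := by rw [ht]; linarith
  have hty : y < t := by rw [ht]; linarith
  have hcrit : 2 * t ^ 2 - 2 * y * t = x := by rw [ht]; field_simp; nlinarith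
  have hval : (y - t) ^ 2 / x = (s - y) ^ 2 / (4 * x) := by
    rw [ht]; field_simp; ring
  apply le_antisymm
  · refine iInf_le_of_le t ?_
    rw [PhiLog, if_pos htpos, ← EReal.coe_add]
    exact le_of_eq (by rw [hval])
  · refine le_iInf fun u => ?_
    by_cases hu : 0 < u
    · rw [PhiLog, if_pos hu, ← EReal.coe_add, EReal.coe_le_coe_iff]
      have hlog : Real.log u - Real.log t ≤ u / t - 1 := by
        have h := Real.log_le_sub_one_of_pos (show 0 < u / t by positivity)
        rwa [Real.log_div (ne_of_gt hu) (ne_of_gt htpos)] at h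
      have h1 : Real.log u - Real.log t ≤ (u - t) * (2 * (t - y)) / x := by
        refine hlog.trans (le_of_eq ?_)
        field_simp
        nlinarith [hcrit]
      have h3 : (y - u) ^ 2 / x - (y - t) ^ 2 / x
          = (u - t) * (2 * (t - y)) / x + (u - t) ^ 2 / x := by
        field_simp; ring
      have h4 : 0 ≤ (u - t) ^ 2 / x := by positivity
      rw [← hval]
      linarith
    · rw [PhiLog, if_neg hu, EReal.top_add_coe]
      exact le_top
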